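/- arXiv:1711.10600 — 3 statements merged into one kernel-verified Lean document; each statement's English description precedes it below -/
import Mathlib

section
/- Let a, b, c be real numbers with c ≠ 0 and b ≠ a, let t = sign((b−a)/c) · |c| / ( |(b−a)/2| + √(c² + ((b−a)/2)²) ), cs = 1/√(1+t²), sn = t·cs, and let J be the 2×2 rotation matrix with rows (cs, sn) and (−sn, cs). Then Jᵀ · [[a, c], [c, b]] · J equals the diagonal matrix diag(a − c·t, b + c·t). -/
open Matrix

/-- Let `a`, `b`, `c` be real numbers with `c ≠ 0` and `b ≠ a`, let `t` be the Jacobi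
rotation parameter, `cs = 1/√(1+t²)`, `sn = t·cs`, and let `J` be the 2×2 rotation
matrix with rows `(cs, sn)` and `(−sn, cs)`. Then `Jᵀ · [[a, c], [c, b]] · J` equals
the diagonal matrix `diag(a − c·t, b + c·t)`. -/
theorem jacobi_rotation_diagonalizes (a b c : ℝ) (hc : c ≠ 0) (hba : b ≠ a)
    (t cs sn : ℝ)
    (ht : t = Real.sign ((b - a) / c) * |c| /
        (|(b - a) / 2| + Real.sqrt (c ^ 2 + ((b - a) / 2) ^ 2)))
    (hcs : cs = 1 / Real.sqrt (1 + t ^ 2)) (hsn : sn = t * cs)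
    (J : Matrix (Fin 2) (Fin 2) ℝ) (hJ : J = !![cs, sn; -sn, cs]) :
    Jᵀ * !![a, c; c, b] * J = !![a - c * t, 0; 0, b + c * t] := by
  set d : ℝ := (b - a) / 2 with hd
  have hdne : d ≠ 0 := by
    simp only [hd]
    intro h
    apply hba
    linarith [(div_eq_zero_iff.mp h).resolve_right (by norm_num : (2:ℝ) ≠ 0)]
  set s : ℝ := Real.sqrt (c ^ 2 + d ^ 2) with hs
  have hs2 : s ^ 2 = c ^ 2 + d ^ 2 := Real.sq_sqrt (by positivity)
  have hspos : 0 < s := Real.sqrt_pos.mpr (by positivity)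
  have hdc : (b - a) / c = 2 * d / c := by rw [hd]; ring
  have key : c * t ^ 2 + 2 * d * t - c = 0 := by
    have hc2 : 0 < c ^ 2 := by positivity
    have habs : |d| < s := by nlinarith [sq_abs d, abs_nonneg d]
    rcases lt_or_gt_of_ne hdne with hdneg | hdpos <;>
      rcases lt_or_gt_of_ne hc with hcneg | hcpos
    · rw [ht, hdc, Real.sign_of_pos (div_pos_of_neg_of_neg (by linarith) hcneg),
        abs_of_neg hcneg, abs_of_neg hdneg]
      have hD : 0 < -d + s := by linarith [neg_abs_le d, abs_nonneg d, habs]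
      field_simp
      linear_combination (-c) * hs2
    · rw [ht, hdc, Real.sign_of_neg (div_neg_of_neg_of_pos (by linarith) hcpos),
        abs_of_pos hcpos, abs_of_neg hdneg]
      have hD : 0 < -d + s := by linarith [neg_abs_le d, abs_nonneg d, habs]
      field_simp
      linear_combination (-c) * hs2
    · rw [ht, hdc, Real.sign_of_neg (div_neg_of_pos_of_neg (by linarith) hcneg),
        abs_of_neg hcneg, abs_of_pos hdpos]
      have hD : 0 < d + s := by linarith
      field_simp
      linear_combination (-c) * hs2
    · rw [ht, hdc, Real.sign_of_pos (div_pos (by linarith) hcpos),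
        abs_of_pos hcpos, abs_of_pos hdpos]
      have hD : 0 < d + s := by linarith
      field_simp
      linear_combination (-c) * hs2
  have h1t : (0:ℝ) < 1 + t ^ 2 := by positivity
  have hcs2 : cs ^ 2 * (1 + t ^ 2) = 1 := by
    rw [hcs, div_pow, one_pow, Real.sq_sqrt (le_of_lt h1t)]
    field_simp
  have hba2 : b - a = 2 * d := by rw [hd]; ring
  have key2 : c * t ^ 2 + (b - a) * t - c = 0 := by rw [hba2]; linarith [key]
  subst hJ hsn
  have hJT : (!![cs, t * cs; -(t * cs), cs] : Matrix (Fin 2) (Fin 2) ℝ)ᵀ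
      = !![cs, -(t * cs); t * cs, cs] := by
    ext i j
    fin_cases i <;> fin_cases j <;> simp
  rw [hJT]
  ext i j
  fin_cases i <;> fin_cases j <;>
    simp [Matrix.mul_apply, Fin.sum_univ_two] <;>
    first
      | linear_combination (a - c * t) * hcs2 + cs ^ 2 * t * key2
      | linear_combination (-(cs ^ 2)) * key2
      | linear_combination cs ^ 2 * key2
      | linear_combination (b + c * t) * hcs2 - cs ^ 2 * t * key2
end

section
/- Let A be an n×n real symmetric positive semidefinite matrix, let i ≠ j be indices with A_{ij} ≠ 0 and A_{ii} ≠ A_{jj}, and set a = A_{ii}, b = A_{jj}, c = A_{ij}, t = sign((b−a)/c) · |c| / ( |(b−a)/2| + √(c² + ((b−a)/2)²) ). Then the updated diagonal entries satisfy 0 ≤ a − c·t ≤ √(‖A‖₁ · ‖A‖∞) and 0 ≤ b + c·t ≤ √(‖A‖₁ · ‖A‖∞). -/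
open Matrix

/-- Maximum absolute column sum: operator norm induced by the ℓ¹ vector norm. -/
noncomputable def colSumNorm {n : Type*} [Fintype n] (A : Matrix n n ℝ) : ℝ :=
  ⨆ j, ∑ i, |A i j|

/-- Maximum absolute row sum: operator norm induced by the ℓ∞ vector norm. -/
noncomputable def rowSumNorm {n : Type*} [Fintype n] (A : Matrix n n ℝ) : ℝ :=
  ⨆ i, ∑ j, |A i j|

/-- Spectral norm: operator norm induced by the Euclidean vector norm. -/
noncomputable def matSpectralNorm {n : Type*} [Fintype n] [DecidableEq n] (A : Matrix n n ℝ) : ℝ :=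
  ‖LinearMap.toContinuousLinearMap (Matrix.toEuclideanLin A)‖

set_option maxHeartbeats 1600000 in
/-- Let `A` be an n×n real symmetric positive semidefinite matrix, `i ≠ j` indices
with `A i j ≠ 0` and `A i i ≠ A j j`, and let `t` be the Jacobi rotation parameter
built from `a = A i i`, `b = A j j`, `c = A i j`. Then the updated diagonal entries
satisfy `0 ≤ a − c·t ≤ √(‖A‖₁ · ‖A‖∞)` and `0 ≤ b + c·t ≤ √(‖A‖₁ · ‖A‖∞)`. -/
theorem jacobi_updated_diag_mem_Icc
    {n : Type*} [Fintype n] [DecidableEq n] (A : Matrix n n ℝ) (hA : A.IsSymm)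
    (hPSD : ∀ x : n → ℝ, 0 ≤ x ⬝ᵥ A.mulVec x)
    (i j : n) (hij : i ≠ j) (hc0 : A i j ≠ 0) (hab : A i i ≠ A j j)
    (a b c t : ℝ) (ha : a = A i i) (hb : b = A j j) (hcc : c = A i j)
    (ht : t = Real.sign ((b - a) / c) * |c| /
        (|(b - a) / 2| + Real.sqrt (c ^ 2 + ((b - a) / 2) ^ 2))) :
    (0 ≤ a - c * t ∧ a - c * t ≤ Real.sqrt (colSumNorm A * rowSumNorm A)) ∧
      (0 ≤ b + c * t ∧ b + c * t ≤ Real.sqrt (colSumNorm A * rowSumNorm A)) := by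
  have hji : A j i = A i j := by simpa using hA.apply i j
  -- quadratic form on the 2x2 block
  have quad : ∀ p q : ℝ, 0 ≤ a * p ^ 2 + 2 * c * (p * q) + b * q ^ 2 := by
    intro p q
    have h := hPSD (Pi.single i p + Pi.single j q)
    simp only [mulVec_add, mulVec_single, dotProduct_add, add_dotProduct,
      single_dotProduct, Pi.add_apply] at h
    simp only [Pi.smul_apply, op_smul_eq_mul, col_apply] at h
    rw [hji] at h
    subst ha hb hcc
    nlinarith [h]
  have hc : c ≠ 0 := hcc ▸ hc0
  have hba : b - a ≠ 0 := fun h => hab (by rw [← ha, ← hb]; linarith)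
  have ha0 : 0 ≤ a := by have := quad 1 0; nlinarith
  have hb0 : 0 ≤ b := by have := quad 0 1; nlinarith
  have hdisc : c ^ 2 ≤ a * b := by
    have h := discrim_le_zero (a := a) (b := 2 * c) (c := b)
      (fun x => by have := quad x 1; nlinarith)
    rw [discrim] at h
    nlinarith
  set μ : ℝ := (b - a) / 2 with hμdef
  have hμ : μ ≠ 0 := by simp [hμdef]; intro h; exact hba (by linarith)
  set s : ℝ := Real.sqrt (c ^ 2 + μ ^ 2) with hsdef
  have hs2 : s ^ 2 = c ^ 2 + μ ^ 2 := Real.sq_sqrt (by positivity)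
  have hs0 : 0 < s := Real.sqrt_pos.2 (by positivity)
  clear_value μ s
  -- closed form of c * t
  have hct : c * t = Real.sign μ * s - μ := by
    rw [ht]
    have hden : 0 < |μ| + s := by positivity
    rcases lt_or_gt_of_ne hμ with hμn | hμp
    · have hba' : b - a < 0 := by rw [hμdef] at hμn; linarith
      rcases lt_or_gt_of_ne hc with hcn | hcp
      · have : (0:ℝ) < (b - a) / c := div_pos_of_neg_of_neg hba' hcn
        rw [Real.sign_of_pos this, Real.sign_of_neg hμn, abs_of_neg hcn,
          abs_of_neg hμn]
        rw [mul_comm, div_mul_eq_mul_div, div_eq_iff (ne_of_gt (by linarith : (0:ℝ) < -μ + s))]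
        nlinarith [hs2]
      · have : (b - a) / c < 0 := div_neg_of_neg_of_pos hba' hcp
        rw [Real.sign_of_neg this, Real.sign_of_neg hμn, abs_of_pos hcp,
          abs_of_neg hμn]
        rw [mul_comm, div_mul_eq_mul_div, div_eq_iff (ne_of_gt (by linarith : (0:ℝ) < -μ + s))]
        nlinarith [hs2]
    · have hba' : 0 < b - a := by rw [hμdef] at hμp; linarith
      rcases lt_or_gt_of_ne hc with hcn | hcp
      · have : (b - a) / c < 0 := div_neg_of_pos_of_neg hba' hcn
        rw [Real.sign_of_neg this, Real.sign_of_pos hμp, abs_of_neg hcn,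
          abs_of_pos hμp]
        rw [mul_comm, div_mul_eq_mul_div, div_eq_iff (ne_of_gt (by linarith : (0:ℝ) < μ + s))]
        nlinarith [hs2]
      · have : (0:ℝ) < (b - a) / c := div_pos hba' hcp
        rw [Real.sign_of_pos this, Real.sign_of_pos hμp, abs_of_pos hcp,
          abs_of_pos hμp]
        rw [mul_comm, div_mul_eq_mul_div, div_eq_iff (ne_of_gt (by linarith : (0:ℝ) < μ + s))]
        nlinarith [hs2]
  -- s ≤ (a+b)/2
  have hsle : s ≤ (a + b) / 2 := by
    rw [hsdef]
    have h1 : Real.sqrt (c ^ 2 + μ ^ 2) ≤ Real.sqrt (((a + b) / 2) ^ 2) := by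
      apply Real.sqrt_le_sqrt
      nlinarith
    calc Real.sqrt (c ^ 2 + μ ^ 2) ≤ Real.sqrt (((a + b) / 2) ^ 2) := h1
    _ = |(a + b) / 2| := Real.sqrt_sq_eq_abs _
    _ = (a + b) / 2 := abs_of_nonneg (by linarith)
  -- s ≤ |μ| + |c|
  have hs_le : s ≤ |μ| + |c| := by
    rw [hsdef]
    have h1 : Real.sqrt (c ^ 2 + μ ^ 2) ≤ Real.sqrt ((|μ| + |c|) ^ 2) := by
      apply Real.sqrt_le_sqrt
      have := abs_nonneg μ; have := abs_nonneg c
      nlinarith [sq_abs μ, sq_abs c, mul_nonneg (abs_nonneg μ) (abs_nonneg c)]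
    calc Real.sqrt (c ^ 2 + μ ^ 2) ≤ Real.sqrt ((|μ| + |c|) ^ 2) := h1
    _ = |(|μ| + |c|)| := Real.sqrt_sq_eq_abs _
    _ = |μ| + |c| := abs_of_nonneg (by positivity)
  -- row sums bound
  set M : ℝ := rowSumNorm A with hMdef
  have hRge : ∀ k : n, ∑ l, |A k l| ≤ M := by
    intro k
    have h := le_ciSup (f := fun m : n => ∑ l, |A m l|)
      (Set.Finite.bddAbove (Set.finite_range _)) k
    simpa [hMdef, rowSumNorm] using h
  have hrow : ∀ k l : n, k ≠ l → |A k k| + |A k l| ≤ ∑ m, |A k m| := by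
    intro k l hkl
    have : ({k, l} : Finset n) ⊆ Finset.univ := Finset.subset_univ _
    calc |A k k| + |A k l| = ∑ m ∈ ({k, l} : Finset n), |A k m| := by
          rw [Finset.sum_pair hkl]
    _ ≤ ∑ m, |A k m| :=
        Finset.sum_le_sum_of_subset_of_nonneg this (fun _ _ _ => abs_nonneg _)
  have hrow_i : a + |c| ≤ M := by
    have h1 := hrow i j hij
    have h2 : |A i i| = a := by rw [← ha, abs_of_nonneg ha0]
    rw [h2, ← hcc] at h1
    exact h1.trans (hRge i)
  have hrow_j : b + |c| ≤ M := by
    have h1 := hrow j i hij.symm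
    have h2 : |A j j| = b := by rw [← hb, abs_of_nonneg hb0]
    rw [h2, hji, ← hcc] at h1
    exact h1.trans (hRge j)
  have hc_nn : 0 ≤ |c| := abs_nonneg c
  -- colSumNorm = rowSumNorm
  have hcol : colSumNorm A = M := by
    rw [hMdef, colSumNorm, rowSumNorm]
    congr 1
    funext k
    exact Finset.sum_congr rfl fun l _ => by rw [hA.apply k l]
  have hM0 : 0 ≤ M := le_trans (Finset.sum_nonneg fun _ _ => abs_nonneg _) (hRge i)
  have hsqrt : Real.sqrt (colSumNorm A * rowSumNorm A) = M := by
    rw [hcol, ← hMdef, Real.sqrt_mul_self hM0]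
  rw [hsqrt]
  clear_value M
  clear hPSD quad hA ht hdisc hs2
  rcases lt_or_gt_of_ne hμ with hμn | hμp
  · rw [Real.sign_of_neg hμn] at hct
    rw [abs_of_neg hμn] at hs_le
    refine ⟨⟨by linarith, by linarith⟩, ⟨by linarith, by linarith⟩⟩
  · rw [Real.sign_of_pos hμp] at hct
    rw [abs_of_pos hμp] at hs_le
    refine ⟨⟨by linarith, by linarith⟩, ⟨by linarith, by linarith⟩⟩
end

section
/- If A is an n×n real symmetric matrix and J is an n×n real orthogonal matrix, then every entry of the updated matrix B = JᵀAJ satisfies |B_{kl}| ≤ √(‖A‖₁ · ‖A‖∞), where the norms are those of the original matrix A. -/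
open Matrix

/-- If `A` is an n×n real symmetric matrix and `J` is an n×n real orthogonal matrix,
then every entry of the updated matrix `B = JᵀAJ` satisfies
`|B k l| ≤ √(‖A‖₁ · ‖A‖∞)`, where the norms are those of the original matrix `A`. -/
theorem abs_entry_conjugated_le_sqrt_colSumNorm_mul_rowSumNorm
    {n : Type*} [Fintype n] [DecidableEq n] (A J : Matrix n n ℝ) (hA : A.IsSymm)
    (hJ : Jᵀ * J = 1) (B : Matrix n n ℝ) (hB : B = Jᵀ * A * J) (k l : n) :
    |B k l| ≤ Real.sqrt (colSumNorm A * rowSumNorm A) := by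
  classical
  have hne : Nonempty n := ⟨k⟩
  set u : n → ℝ := fun i => J i k with hu_def
  set v : n → ℝ := fun j => J j l with hv_def
  have hu : ∑ i, u i ^ 2 = 1 := by
    have := congrFun (congrFun hJ k) k
    simpa [Matrix.mul_apply, Matrix.transpose_apply, Matrix.one_apply, sq, hu_def] using this
  have hv : ∑ j, v j ^ 2 = 1 := by
    have := congrFun (congrFun hJ l) l
    simpa [Matrix.mul_apply, Matrix.transpose_apply, Matrix.one_apply, sq, hv_def] using this
  have hBkl : B k l = ∑ i, ∑ j, u i * A i j * v j := by
    rw [hB]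
    simp only [Matrix.mul_apply, Matrix.transpose_apply, Finset.sum_mul]
    rw [Finset.sum_comm]
  -- bounds on row/col sums
  have hrow : ∀ i, ∑ j, |A i j| ≤ rowSumNorm A := fun i => by
    unfold rowSumNorm
    exact le_ciSup (f := fun i : n => ∑ j, |A i j|) (Set.Finite.bddAbove (Set.finite_range _)) i
  have hcol : ∀ j, ∑ i, |A i j| ≤ colSumNorm A := fun j => by
    unfold colSumNorm
    exact le_ciSup (f := fun j : n => ∑ i, |A i j|) (Set.Finite.bddAbove (Set.finite_range _)) j
  have hrow0 : 0 ≤ rowSumNorm A :=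
    le_trans (Finset.sum_nonneg fun j _ => abs_nonneg _) (hrow k)
  have hcol0 : 0 ≤ colSumNorm A :=
    le_trans (Finset.sum_nonneg fun i _ => abs_nonneg _) (hcol k)
  set f : n × n → ℝ := fun p => Real.sqrt |A p.1 p.2| * |u p.1| with hf_def
  set g : n × n → ℝ := fun p => Real.sqrt |A p.1 p.2| * |v p.2| with hg_def
  set S : ℝ := ∑ p : n × n, f p * g p with hS_def
  have hS0 : 0 ≤ S := Finset.sum_nonneg fun p _ =>
    mul_nonneg (mul_nonneg (Real.sqrt_nonneg _) (abs_nonneg _))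
      (mul_nonneg (Real.sqrt_nonneg _) (abs_nonneg _))
  have habsS : |B k l| ≤ S := by
    rw [hBkl, hS_def]
    calc |∑ i, ∑ j, u i * A i j * v j| ≤ ∑ i, ∑ j, |u i * A i j * v j| := by
          refine (Finset.abs_sum_le_sum_abs _ _).trans ?_
          exact Finset.sum_le_sum fun i _ => Finset.abs_sum_le_sum_abs _ _
      _ = ∑ p : n × n, f p * g p := by
          rw [Fintype.sum_prod_type]
          refine Finset.sum_congr rfl fun i _ => Finset.sum_congr rfl fun j _ => ?_
          simp only [hf_def, hg_def]
          rw [mul_mul_mul_comm, Real.mul_self_sqrt (abs_nonneg _)]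
          rw [abs_mul, abs_mul]
          ring
  have hf2 : ∑ p : n × n, f p ^ 2 ≤ rowSumNorm A := by
    have : ∑ p : n × n, f p ^ 2 = ∑ i, u i ^ 2 * ∑ j, |A i j| := by
      rw [Fintype.sum_prod_type]
      refine Finset.sum_congr rfl fun i _ => ?_
      rw [Finset.mul_sum]
      refine Finset.sum_congr rfl fun j _ => ?_
      simp only [hf_def]
      rw [mul_pow, Real.sq_sqrt (abs_nonneg _), sq_abs]
      ring
    rw [this]
    calc ∑ i, u i ^ 2 * ∑ j, |A i j| ≤ ∑ i, u i ^ 2 * rowSumNorm A :=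
          Finset.sum_le_sum fun i _ => mul_le_mul_of_nonneg_left (hrow i) (sq_nonneg _)
      _ = rowSumNorm A := by rw [← Finset.sum_mul, hu, one_mul]
  have hg2 : ∑ p : n × n, g p ^ 2 ≤ colSumNorm A := by
    have : ∑ p : n × n, g p ^ 2 = ∑ j, v j ^ 2 * ∑ i, |A i j| := by
      rw [Fintype.sum_prod_type_right]
      refine Finset.sum_congr rfl fun j _ => ?_
      rw [Finset.mul_sum]
      refine Finset.sum_congr rfl fun i _ => ?_
      simp only [hg_def]
      rw [mul_pow, Real.sq_sqrt (abs_nonneg _), sq_abs]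
      ring
    rw [this]
    calc ∑ j, v j ^ 2 * ∑ i, |A i j| ≤ ∑ j, v j ^ 2 * colSumNorm A :=
          Finset.sum_le_sum fun j _ => mul_le_mul_of_nonneg_left (hcol j) (sq_nonneg _)
      _ = colSumNorm A := by rw [← Finset.sum_mul, hv, one_mul]
  have hCS : S ^ 2 ≤ (∑ p : n × n, f p ^ 2) * (∑ p : n × n, g p ^ 2) :=
    Finset.sum_mul_sq_le_sq_mul_sq Finset.univ f g
  have hS2 : S ^ 2 ≤ colSumNorm A * rowSumNorm A := by
    refine hCS.trans ?_
    rw [mul_comm]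
    exact mul_le_mul hg2 hf2 (Finset.sum_nonneg fun p _ => sq_nonneg _) hcol0
  exact habsS.trans ((Real.le_sqrt hS0 (mul_nonneg hcol0 hrow0)).mpr hS2)
end
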